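/- Let M be a finite set with |M| ≥ 2, let w assign a nonnegative weight w_{ij} to each unordered pair {i,j} of distinct elements of M, and let A ⊆ M. Suppose R : M → ℝ is A-feasible. Then for every partition P of M into k ≥ 2 nonempty parts, each of which contains an element of A, one has Σ_{j∈M} R_j ≥ Σ_{all pairs {i,j}} w_{ij} − (1/(k−1)) · Σ_{pairs {i,j} crossing P} w_{ij}, where a pair {i,j} crosses P if i and j lie in different parts of P. -/

import Mathlib

open scoped Classical

/-- Let `M` be a finite set with `|M| ≥ 2`, let `w` assign a nonnegative
weight to each unordered pair of distinct elements of `M`, and let `A ⊆ M`.  Suppose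
`R : M → ℝ` is `A`-feasible.  Then for every partition `P` of `M` into `k ≥ 2` nonempty
parts, each of which contains an element of `A`, one has
`∑_{j ∈ M} R j ≥ ∑_{all pairs} w − (1 / (k − 1)) · ∑_{pairs crossing P} w`,
where a pair `{i, j}` crosses `P` if `i` and `j` lie in different parts of `P`. -/
theorem stmt_6 {V : Type*} [Fintype V] (hcard : 2 ≤ Fintype.card V)
    (w : Sym2 V → ℝ) (hw : ∀ e : Sym2 V, ¬ e.IsDiag → 0 ≤ w e)
    (A : Finset V)
    (R : V → ℝ) (hR0 : ∀ j, 0 ≤ R j)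
    (hfeas : ∀ B : Finset V, B ⊂ Finset.univ → ¬ A ⊆ B →
      ∑ e ∈ Finset.univ.filter (fun e : Sym2 V => ¬ e.IsDiag ∧ ∀ v ∈ e, v ∈ B), w e
        ≤ ∑ j ∈ B, R j)
    (P : Finset (Finset V)) (hk : 2 ≤ P.card)
    (hne : ∀ p ∈ P, p.Nonempty)
    (hdisj : ∀ p ∈ P, ∀ q ∈ P, p ≠ q → Disjoint p q)
    (hcover : ∀ v : V, ∃ p ∈ P, v ∈ p)
    (hAP : ∀ p ∈ P, ∃ a ∈ A, a ∈ p) :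
    (∑ e ∈ Finset.univ.filter (fun e : Sym2 V => ¬ e.IsDiag), w e)
      - (1 / ((P.card : ℝ) - 1)) *
        ∑ e ∈ Finset.univ.filter (fun e : Sym2 V =>
          ∃ x y : V, e = s(x, y) ∧ ∃ p ∈ P, ∃ q ∈ P, p ≠ q ∧ x ∈ p ∧ y ∈ q), w e
      ≤ ∑ j, R j := by
  classical
  set CR : Sym2 V → Prop := fun e =>
    ∃ x y : V, e = s(x, y) ∧ ∃ p ∈ P, ∃ q ∈ P, p ≠ q ∧ x ∈ p ∧ y ∈ q with hCRdef
  -- uniqueness of parts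
  have huniq : ∀ p ∈ P, ∀ q ∈ P, ∀ v : V, v ∈ p → v ∈ q → p = q := by
    intro p hp q hq v hvp hvq
    by_contra h
    exact (Finset.disjoint_left.mp (hdisj p hp q hq h)) hvp hvq
  -- crossing edges are not diagonal
  have hCRnd : ∀ e, CR e → ¬ e.IsDiag := by
    rintro e ⟨x, y, rfl, p, hp, q, hq, hpq, hxp, hyq⟩
    rw [Sym2.mk_isDiag_iff]
    intro hxy
    exact hpq (huniq p hp q hq x hxp (hxy ▸ hyq))
  -- feasibility applied to the complement of each part
  have hfe : ∀ p ∈ P,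
      ∑ e ∈ Finset.univ.filter (fun e : Sym2 V => ¬ e.IsDiag ∧ ∀ v ∈ e, v ∈ pᶜ), w e
        ≤ ∑ j ∈ pᶜ, R j := by
    intro p hp
    apply hfeas
    · obtain ⟨v, hv⟩ := hne p hp
      refine Finset.ssubset_univ_iff.mpr ?_
      intro h
      have : v ∈ pᶜ := h ▸ Finset.mem_univ v
      exact (Finset.mem_compl.mp this) hv
    · obtain ⟨a, haA, hap⟩ := hAP p hp
      intro hsub
      exact (Finset.mem_compl.mp (hsub haA)) hap
  -- the parts partition V
  have hRpart : ∑ p ∈ P, ∑ j ∈ p, R j = ∑ j, R j := by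
    have hbi : P.biUnion id = Finset.univ := by
      ext v
      simp only [Finset.mem_biUnion, id, Finset.mem_univ, iff_true]
      exact hcover v
    have hd : (↑P : Set (Finset V)).PairwiseDisjoint id :=
      fun p hp q hq hpq => hdisj p hp q hq hpq
    rw [← hbi, Finset.sum_biUnion hd]
    rfl
  -- sum of R over complements
  have hRc : ∑ p ∈ P, ∑ j ∈ pᶜ, R j = ((P.card : ℝ) - 1) * ∑ j, R j := by
    have h1 : ∀ p ∈ P, ∑ j ∈ pᶜ, R j = (∑ j, R j) - ∑ j ∈ p, R j := by
      intro p _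
      have := Finset.sum_add_sum_compl p R
      linarith
    rw [Finset.sum_congr rfl h1, Finset.sum_sub_distrib, Finset.sum_const, hRpart,
      nsmul_eq_mul]
    ring
  -- double counting
  have hdc : ∑ p ∈ P, ∑ e ∈ Finset.univ.filter
        (fun e : Sym2 V => ¬ e.IsDiag ∧ ∀ v ∈ e, v ∈ pᶜ), w e
      = ∑ e ∈ Finset.univ.filter (fun e : Sym2 V => ¬ e.IsDiag),
          ((P.filter (fun p => ∀ v ∈ e, v ∉ p)).card : ℝ) * w e := by
    have step1 : ∀ p : Finset V,
        Finset.univ.filter (fun e : Sym2 V => ¬ e.IsDiag ∧ ∀ v ∈ e, v ∈ pᶜ)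
          = (Finset.univ.filter (fun e : Sym2 V => ¬ e.IsDiag)).filter
              (fun e => ∀ v ∈ e, v ∉ p) := by
      intro p
      rw [Finset.filter_filter]
      apply Finset.filter_congr
      intro e _
      simp [Finset.mem_compl]
    calc ∑ p ∈ P, ∑ e ∈ Finset.univ.filter
          (fun e : Sym2 V => ¬ e.IsDiag ∧ ∀ v ∈ e, v ∈ pᶜ), w e
        = ∑ p ∈ P, ∑ e ∈ Finset.univ.filter (fun e : Sym2 V => ¬ e.IsDiag),
            (if (∀ v ∈ e, v ∉ p) then w e else 0) := by
          refine Finset.sum_congr rfl fun p _ => ?_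
          rw [step1 p, Finset.sum_filter]
      _ = ∑ e ∈ Finset.univ.filter (fun e : Sym2 V => ¬ e.IsDiag),
            ∑ p ∈ P, (if (∀ v ∈ e, v ∉ p) then w e else 0) := Finset.sum_comm
      _ = _ := by
          refine Finset.sum_congr rfl fun e _ => ?_
          rw [← Finset.sum_filter, Finset.sum_const, nsmul_eq_mul]
  -- per-edge counting bound
  have hbound : ∀ e ∈ Finset.univ.filter (fun e : Sym2 V => ¬ e.IsDiag),
      ((P.card : ℝ) - 1) * w e - (if CR e then w e else 0)
        ≤ ((P.filter (fun p => ∀ v ∈ e, v ∉ p)).card : ℝ) * w e := by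
    intro e he
    have hnd : ¬ e.IsDiag := (Finset.mem_filter.mp he).2
    have hwe : 0 ≤ w e := hw e hnd
    have hsplit : (P.filter (fun p => ∀ v ∈ e, v ∉ p)).card
        + (P.filter (fun p => ¬ ∀ v ∈ e, v ∉ p)).card = P.card :=
      Finset.card_filter_add_card_filter_not _
    induction e using Sym2.ind with
    | _ x y =>
      obtain ⟨px, hpx, hxpx⟩ := hcover x
      obtain ⟨py, hpy, hypy⟩ := hcover y
      have hmem : ∀ p ∈ P.filter (fun p => ¬ ∀ v ∈ s(x, y), v ∉ p), p = px ∨ p = py := by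
        intro p hpmem
        obtain ⟨hpP, hnp⟩ := Finset.mem_filter.mp hpmem
        push_neg at hnp
        obtain ⟨v, hv, hvp⟩ := hnp
        rcases Sym2.mem_iff.mp hv with rfl | rfl
        · exact Or.inl (huniq p hpP px hpx v hvp hxpx)
        · exact Or.inr (huniq p hpP py hpy v hvp hypy)
      by_cases hcr : CR s(x, y)
      · -- crossing: at most 2 parts meet the edge
        have hm2 : (P.filter (fun p => ¬ ∀ v ∈ s(x, y), v ∉ p)).card ≤ 2 := by
          have hsub : P.filter (fun p => ¬ ∀ v ∈ s(x, y), v ∉ p) ⊆ {px, py} := by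
            intro p hpmem
            rcases hmem p hpmem with rfl | rfl <;> simp
          calc (P.filter (fun p => ¬ ∀ v ∈ s(x, y), v ∉ p)).card
              ≤ ({px, py} : Finset (Finset V)).card := Finset.card_le_card hsub
            _ ≤ 2 := (Finset.card_insert_le _ _).trans (by simp)
        have hak : P.card ≤ (P.filter (fun p => ∀ v ∈ s(x, y), v ∉ p)).card + 2 := by omega
        have hakR : (P.card : ℝ)
            ≤ ((P.filter (fun p => ∀ v ∈ s(x, y), v ∉ p)).card : ℝ) + 2 := by
          exact_mod_cast hak
        rw [if_pos hcr]
        nlinarith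
      · -- non-crossing: at most 1 part meets the edge
        have hpxy : px = py := by
          by_contra h
          exact hcr ⟨x, y, rfl, px, hpx, py, hpy, h, hxpx, hypy⟩
        have hm1 : (P.filter (fun p => ¬ ∀ v ∈ s(x, y), v ∉ p)).card ≤ 1 := by
          have hsub : P.filter (fun p => ¬ ∀ v ∈ s(x, y), v ∉ p) ⊆ {px} := by
            intro p hpmem
            rcases hmem p hpmem with rfl | rfl
            · simp
            · simp [hpxy]
          calc (P.filter (fun p => ¬ ∀ v ∈ s(x, y), v ∉ p)).card
              ≤ ({px} : Finset (Finset V)).card := Finset.card_le_card hsub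
            _ = 1 := Finset.card_singleton _
        have hak : P.card ≤ (P.filter (fun p => ∀ v ∈ s(x, y), v ∉ p)).card + 1 := by omega
        have hakR : (P.card : ℝ)
            ≤ ((P.filter (fun p => ∀ v ∈ s(x, y), v ∉ p)).card : ℝ) + 1 := by
          exact_mod_cast hak
        rw [if_neg hcr]
        nlinarith
  -- rewrite the crossing sum over nondiagonal edges
  have hCfil : Finset.univ.filter CR
      = (Finset.univ.filter (fun e : Sym2 V => ¬ e.IsDiag)).filter CR := by
    rw [Finset.filter_filter]
    ext e
    simp only [Finset.mem_filter, Finset.mem_univ, true_and]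
    exact ⟨fun h => ⟨hCRnd e h, h⟩, fun h => h.2⟩
  -- main inequality
  have hmain : ((P.card : ℝ) - 1)
        * (∑ e ∈ Finset.univ.filter (fun e : Sym2 V => ¬ e.IsDiag), w e)
      - (∑ e ∈ Finset.univ.filter CR, w e)
      ≤ ((P.card : ℝ) - 1) * ∑ j, R j := by
    have hC2 : (∑ e ∈ Finset.univ.filter CR, w e)
        = ∑ e ∈ Finset.univ.filter (fun e : Sym2 V => ¬ e.IsDiag),
            (if CR e then w e else 0) := by
      rw [hCfil, Finset.sum_filter (p := CR)]
    have h1 : ((P.card : ℝ) - 1)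
          * (∑ e ∈ Finset.univ.filter (fun e : Sym2 V => ¬ e.IsDiag), w e)
        - (∑ e ∈ Finset.univ.filter CR, w e)
        = ∑ e ∈ Finset.univ.filter (fun e : Sym2 V => ¬ e.IsDiag),
            (((P.card : ℝ) - 1) * w e - (if CR e then w e else 0)) := by
      rw [Finset.sum_sub_distrib, ← Finset.mul_sum, hC2]
    rw [h1]
    calc ∑ e ∈ Finset.univ.filter (fun e : Sym2 V => ¬ e.IsDiag),
          (((P.card : ℝ) - 1) * w e - (if CR e then w e else 0))
        ≤ ∑ e ∈ Finset.univ.filter (fun e : Sym2 V => ¬ e.IsDiag),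
            ((P.filter (fun p => ∀ v ∈ e, v ∉ p)).card : ℝ) * w e :=
          Finset.sum_le_sum hbound
      _ = ∑ p ∈ P, ∑ e ∈ Finset.univ.filter
            (fun e : Sym2 V => ¬ e.IsDiag ∧ ∀ v ∈ e, v ∈ pᶜ), w e := hdc.symm
      _ ≤ ∑ p ∈ P, ∑ j ∈ pᶜ, R j := Finset.sum_le_sum hfe
      _ = ((P.card : ℝ) - 1) * ∑ j, R j := hRc
  -- conclude
  have hkR : (2 : ℝ) ≤ (P.card : ℝ) := by exact_mod_cast hk
  have ht0 : (0 : ℝ) < (P.card : ℝ) - 1 := by linarith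
  set W := ∑ e ∈ Finset.univ.filter (fun e : Sym2 V => ¬ e.IsDiag), w e
  set C := ∑ e ∈ Finset.univ.filter CR, w e
  set S := ∑ j, R j
  have heq : W - 1 / ((P.card : ℝ) - 1) * C = (((P.card : ℝ) - 1) * W - C) / ((P.card : ℝ) - 1) := by
    field_simp
  rw [heq, div_le_iff₀ ht0]
  linarith [hmain, mul_comm S ((P.card : ℝ) - 1)]
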